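/- Let D be a nonempty set of natural numbers closed under addition (x ∈ D and y ∈ D imply x + y ∈ D). Then D is eventually an arithmetic progression: there exist N, g : ℕ such that for every x ≥ N one has x ∈ D if and only if g divides x. -/

import Mathlib

theorem addSemigroup_eventually_arithmetic_progression
    (D : Set ℕ) (hne : D.Nonempty)
    (hadd : ∀ x ∈ D, ∀ y ∈ D, x + y ∈ D) :
    ∃ N g : ℕ, ∀ x, N ≤ x → (x ∈ D ↔ g ∣ x) := by
  classical
  by_cases hD : ∀ d ∈ D, d = 0
  · refine ⟨1, 0, fun x hx => ⟨fun h => absurd (hD x h) (by omega), fun h => by omega⟩⟩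
  push_neg at hD
  obtain ⟨a, haD, ha0'⟩ := hD
  have ha0 : 0 < a := Nat.pos_of_ne_zero ha0'
  haveI : NeZero a := ⟨ha0'⟩
  -- The submonoid D ∪ {0}
  let M : AddSubmonoid ℕ :=
    { carrier := insert 0 D
      zero_mem' := Set.mem_insert _ _
      add_mem' := by
        rintro x y (rfl | hx) (rfl | hy)
        · exact Or.inl rfl
        · simpa using Or.inr hy
        · simpa using Or.inr hx
        · exact Or.inr (hadd _ hx _ hy) }
  have hMD : ∀ x, x ∈ M ↔ x = 0 ∨ x ∈ D := fun x => Set.mem_insert_iff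
  set H : AddSubgroup ℤ := AddSubgroup.closure ((Nat.cast : ℕ → ℤ) '' D) with hH
  obtain ⟨g, hg⟩ := Int.subgroup_cyclic H
  set G : ℕ := g.natAbs with hGdef
  have hdvd : ∀ d ∈ D, G ∣ d := by
    intro d hd
    have hmem : (d : ℤ) ∈ H := AddSubgroup.subset_closure ⟨d, hd, rfl⟩
    rw [hg, AddSubgroup.mem_closure_singleton] at hmem
    obtain ⟨n, hn⟩ := hmem
    have hzd : g ∣ (d : ℤ) := Dvd.intro_left n (by rw [← hn, smul_eq_mul])
    exact Int.ofNat_dvd.mp (by simpa [hGdef] using Int.natAbs_dvd.mpr hzd)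
  have hGpos : 0 < G := Nat.pos_of_dvd_of_pos (hdvd a haD) ha0
  -- G as an integer is in H
  have hGH : (G : ℤ) ∈ H := by
    have hgH : g ∈ H := by rw [hg]; exact AddSubgroup.subset_closure rfl
    rcases Int.natAbs_eq g with h | h
    · rw [hGdef, ← h]; exact hgH
    · have : -g = (G : ℤ) := by omega
      rw [← this]; exact neg_mem hgH
  -- Extract p = q + G with p, q ∈ M
  have key : ∀ x : ℤ, x ∈ H → ∃ p q : ℕ, p ∈ M ∧ q ∈ M ∧ x = (p : ℤ) - q := by
    intro x hx
    rw [hH] at hx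
    induction hx using AddSubgroup.closure_induction with
    | mem x hx =>
      obtain ⟨d, hd, rfl⟩ := hx
      exact ⟨d, 0, (hMD d).mpr (Or.inr hd), (hMD 0).mpr (Or.inl rfl), by simp⟩
    | zero => exact ⟨0, 0, zero_mem M, zero_mem M, by simp⟩
    | add x y hx hy ihx ihy =>
      obtain ⟨p1, q1, hp1, hq1, h1⟩ := ihx
      obtain ⟨p2, q2, hp2, hq2, h2⟩ := ihy
      exact ⟨p1 + p2, q1 + q2, add_mem hp1 hp2, add_mem hq1 hq2, by push_cast; omega⟩
    | neg x hx ihx =>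
      obtain ⟨p1, q1, hp1, hq1, h1⟩ := ihx
      exact ⟨q1, p1, hq1, hp1, by omega⟩
  obtain ⟨p, q, hpM, hqM, hpqG⟩ := key _ hGH
  have hpq' : p = q + G := by omega
  -- the image of M in ZMod a
  let R : AddSubmonoid (ZMod a) := M.map (Nat.castRingHom (ZMod a)).toAddMonoidHom
  have hmemR : ∀ z : ZMod a, z ∈ R ↔ ∃ e, e ∈ M ∧ (e : ZMod a) = z := by
    intro z
    constructor
    · rintro ⟨e, he, rfl⟩; exact ⟨e, he, rfl⟩
    · rintro ⟨e, he, rfl⟩; exact ⟨e, he, rfl⟩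
  have hnegR : ∀ z ∈ R, -z ∈ R := by
    intro z hz
    have hord : 0 < addOrderOf z := addOrderOf_pos z
    have hzero : addOrderOf z • z = 0 := addOrderOf_nsmul_eq_zero z
    have : z + (addOrderOf z - 1) • z = 0 := by
      rw [← succ_nsmul' z (addOrderOf z - 1)]
      rw [Nat.sub_add_cancel hord]
      exact hzero
    have hneg : -z = (addOrderOf z - 1) • z := neg_eq_of_add_eq_zero_right this
    rw [hneg]
    exact AddSubmonoid.nsmul_mem R hz _
  -- every multiple of G lands in R mod a
  have hmulR : ∀ m : ℕ, ((m * G : ℕ) : ZMod a) ∈ R := by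
    intro m
    have hGR : ((G : ℕ) : ZMod a) ∈ R := by
      have hp : ((p : ℕ) : ZMod a) ∈ R := ⟨p, hpM, rfl⟩
      have hq : -((q : ℕ) : ZMod a) ∈ R := hnegR _ ⟨q, hqM, rfl⟩
      have : ((G : ℕ) : ZMod a) = ((p : ℕ) : ZMod a) + -((q : ℕ) : ZMod a) := by
        rw [hpq']; push_cast; ring
      rw [this]; exact add_mem hp hq
    have : ((m * G : ℕ) : ZMod a) = m • ((G : ℕ) : ZMod a) := by push_cast; simp [nsmul_eq_mul]
    rw [this]; exact AddSubmonoid.nsmul_mem R hGR m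
  -- choose representatives
  let f : ZMod a → ℕ := fun z => if h : ∃ e, e ∈ M ∧ (e : ZMod a) = z then h.choose else 0
  refine ⟨Finset.univ.sup f + 1, G, fun x hx => ⟨fun hxD => hdvd x hxD, fun hGx => ?_⟩⟩
  obtain ⟨m, rfl⟩ := hGx
  set x := G * m with hxdef
  have hxR : ((x : ℕ) : ZMod a) ∈ R := by rw [hxdef, mul_comm]; exact hmulR m
  have hex : ∃ e, e ∈ M ∧ (e : ZMod a) = ((x : ℕ) : ZMod a) := (hmemR _).mp hxR
  have hfx : f ((x : ℕ) : ZMod a) = hex.choose := dif_pos hex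
  set e := hex.choose with hedef
  obtain ⟨heM, hecast⟩ := hex.choose_spec
  have hele : e ≤ Finset.univ.sup f := by
    have hle := Finset.le_sup (f := f) (Finset.mem_univ ((x : ℕ) : ZMod a))
    rw [hfx] at hle
    exact hle
  have hex' : e ≤ x := by omega
  have hmod : e ≡ x [MOD a] := (ZMod.natCast_eq_natCast_iff _ _ _).mp hecast
  obtain ⟨k, hk⟩ := (Nat.modEq_iff_dvd' hex').mp hmod
  have hxek : x = e + a * k := by omega
  have hxM : x ∈ M := by
    rw [hxek]
    refine add_mem heM ?_
    have haM : a ∈ M := (hMD a).mpr (Or.inr haD)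
    have : a * k = k • a := by simp [nsmul_eq_mul, mul_comm]
    rw [this]
    exact AddSubmonoid.nsmul_mem M haM k
  rcases (hMD x).mp hxM with h0 | h
  · omega
  · exact h
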